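/- Let 1/2 < α < 1 and x > 1. The sequence z₀ = x, z_{k+1} = ((1−α)z_k − 1/z_k)/α + x + 1 converges, and its limit equals z_∞(x) = (α(x+1) + √(α²(x+1)² − 4(2α−1)))/(4α − 2). -/

import Mathlib

set_option maxHeartbeats 1600000


/-- for 1/2 < α < 1 and x > 1 the sequence z₀ = x,
z_{k+1} = ((1−α)z_k − 1/z_k)/α + x + 1 converges to
z_∞(x) = (α(x+1) + √(α²(x+1)² − 4(2α−1)))/(4α − 2). -/
theorem stmt6 (α x : ℝ) (hα : 1/2 < α) (hα1 : α < 1) (hx : 1 < x)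
    (z : ℕ → ℝ) (hz0 : z 0 = x)
    (hrec : ∀ k, z (k+1) = ((1-α) * z k - 1/(z k))/α + x + 1) :
    Filter.Tendsto z Filter.atTop
      (nhds ((α*(x+1) + Real.sqrt (α^2*(x+1)^2 - 4*(2*α-1)))/(4*α-2))) := by
  have hα0 : 0 < α := by linarith
  have hA : 0 < 2*α - 1 := by linarith
  have hx0 : (0:ℝ) < x := by linarith
  have hD : 0 < α^2*(x+1)^2 - 4*(2*α-1) := by
    nlinarith [sq_nonneg (α-1), mul_pos (mul_pos hα0 hα0) (mul_pos (sub_pos.2 hx) (show (0:ℝ) < x+3 by linarith))]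
  obtain ⟨s, hsdef⟩ : ∃ s, s = Real.sqrt (α^2*(x+1)^2 - 4*(2*α-1)) := ⟨_, rfl⟩
  have hs2 : s^2 = α^2*(x+1)^2 - 4*(2*α-1) := by rw [hsdef]; exact Real.sq_sqrt hD.le
  have hs0 : 0 < s := by rw [hsdef]; exact Real.sqrt_pos.2 hD
  obtain ⟨L, hLdef⟩ : ∃ L, L = (α*(x+1) + s)/(4*α-2) := ⟨_, rfl⟩
  have h42 : (0:ℝ) < 4*α - 2 := by linarith
  have hqL : (2*α-1)*L^2 - α*(x+1)*L + 1 = 0 := by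
    rw [hLdef]; have h' : α*4-2 ≠ 0 := by linarith
    field_simp; nlinarith [hs2]
  have hqx : (2*α-1)*x^2 - α*(x+1)*x + 1 < 0 := by
    nlinarith [mul_pos (mul_pos (sub_pos.2 hα1) hx0) (sub_pos.2 hx)]
  have hxL : x < L := by
    rw [hLdef, lt_div_iff₀ h42]
    nlinarith [hqx, hs0, hs2, mul_pos hA hA, sq_nonneg (2*(2*α-1)*x - α*(x+1))]
  have hL0 : 0 < L := by linarith
  -- quadratic negative on [x, L)
  have hquad : ∀ t, x ≤ t → t < L → (2*α-1)*t^2 - α*(x+1)*t + 1 < 0 := by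
    intro t h1 h2
    nlinarith [hqx, hqL, hA, mul_nonneg (mul_nonneg hA.le (sub_nonneg.2 h1)) (sub_nonneg.2 h2.le),
      mul_nonneg (sub_nonneg.2 h1) (sub_nonneg.2 h2.le)]
  -- one step
  have hstep : ∀ t, x ≤ t → t < L →
      t < ((1-α)*t - 1/t)/α + x + 1 ∧ ((1-α)*t - 1/t)/α + x + 1 < L := by
    intro t h1 h2
    have ht0 : 0 < t := by linarith
    have hq := hquad t h1 h2
    have htne : t ≠ 0 := ht0.ne'
    have hαne : α ≠ 0 := hα0.ne'
    have hLne : L ≠ 0 := hL0.ne'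
    have hinv : t * (1/t) = 1 := by field_simp
    have hlt : (2*α-1)*t + 1/t < α*(x+1) := by nlinarith [hq, hinv, ht0]
    constructor
    · have hid : ((1-α)*t - 1/t)/α + x + 1 - t = (α*(x+1) - ((2*α-1)*t + 1/t))/α := by
        field_simp
        ring
      have := div_pos (sub_pos.2 hlt) hα0
      linarith [hid ▸ this]
    · have hfL : ((1-α)*L - 1/L)/α + x + 1 = L := by
        field_simp
        nlinarith [hqL]
      have hnum : (1-α)*t - 1/t < (1-α)*L - 1/L := by
        have h3 : 1/L < 1/t := one_div_lt_one_div_of_lt ht0 h2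
        have h4 : (1-α)*t < (1-α)*L := by nlinarith [sub_pos.2 hα1]
        linarith
      have h5 : ((1-α)*t - 1/t)/α < ((1-α)*L - 1/L)/α := by
        apply div_lt_div_of_pos_right hnum hα0
      linarith [hfL]
  have key : ∀ k, x ≤ z k ∧ z k < L := by
    intro k
    induction k with
    | zero => exact ⟨hz0.ge, hz0 ▸ hxL⟩
    | succ n ih =>
      obtain ⟨h1, h2⟩ := ih
      obtain ⟨hs1, hs2'⟩ := hstep (z n) h1 h2
      rw [hrec n]
      exact ⟨le_trans h1 (by linarith), hs2'⟩
  have hmono : Monotone z := by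
    apply monotone_nat_of_le_succ
    intro k
    obtain ⟨h1, h2⟩ := key k
    rw [hrec k]
    exact ((hstep (z k) h1 h2).1).le
  have hbdd : BddAbove (Set.range z) := ⟨L, by rintro y ⟨k, rfl⟩; exact (key k).2.le⟩
  obtain ⟨c, hcdef⟩ : ∃ c, c = ⨆ i, z i := ⟨_, rfl⟩
  have hc : Filter.Tendsto z Filter.atTop (nhds c) := hcdef ▸ tendsto_atTop_ciSup hmono hbdd
  have hcx : x ≤ c := by rw [hcdef, ← hz0]; exact le_ciSup hbdd 0
  have hcL : c ≤ L := by rw [hcdef]; exact ciSup_le (fun k => (key k).2.le)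
  have hc0 : 0 < c := by linarith
  have hcne : c ≠ 0 := hc0.ne'
  have h1 : Filter.Tendsto (fun k => z (k+1)) Filter.atTop (nhds c) :=
    hc.comp (Filter.tendsto_add_atTop_nat 1)
  have hcont : ContinuousAt (fun t : ℝ => ((1-α)*t - 1/t)/α + x + 1) c := by
    apply ContinuousAt.add
    apply ContinuousAt.add
    apply ContinuousAt.div_const
    exact (continuousAt_const.mul continuousAt_id).sub (continuousAt_const.div continuousAt_id hcne)
    exact continuousAt_const
    exact continuousAt_const
  have h2 : Filter.Tendsto (fun k => z (k+1)) Filter.atTop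
      (nhds (((1-α)*c - 1/c)/α + x + 1)) := by
    have := hcont.tendsto.comp hc
    simpa [Function.comp_def, hrec] using this
  have hceq : c = ((1-α)*c - 1/c)/α + x + 1 := tendsto_nhds_unique h1 h2
  have hqc : (2*α-1)*c^2 - α*(x+1)*c + 1 = 0 := by
    have hd : (2*α-1)*c^2 - α*(x+1)*c + 1
        = (c - (((1-α)*c - 1/c)/α + x + 1)) * (α*c) := by
      field_simp
      ring
    rw [hd, sub_eq_zero_of_eq hceq, zero_mul]
  have hfac : (c - L) * ((2*α-1)*(c+L) - α*(x+1)) = 0 := by linear_combination hqc - hqL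
  have hcL' : c = L := by
    rcases mul_eq_zero.1 hfac with h | h
    · linarith [sub_eq_zero.1 h]
    · exfalso
      have heq : (2*α-1)*(c+L) = α*(x+1) := by linarith
      nlinarith [hqx, hqc, heq, mul_nonneg (sub_nonneg.2 hcx) (sub_pos.2 hxL).le, hA]
  have : (α*(x+1) + Real.sqrt (α^2*(x+1)^2 - 4*(2*α-1)))/(4*α-2) = c := by
    rw [hcL', hLdef, hsdef]
  rw [this]
  exact hc
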